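/- Let f : [0,1]^m → ℝ be a function such that the upper-scaled oscillation L_f(x) is finite for every x ∈ [0,1]^m. Then [0,1]^m can be written as a countable union of sets E_1, E_2, … such that the restriction of f to each E_n is a Lipschitz function. -/

import Mathlib

open Set MeasureTheory Metric Filter
open scoped ENNReal NNReal Topology

/-- Lower-scaled oscillation of `f` with domain `A`:
`l_f(x) = liminf_{r→0⁺} (sup_{y ∈ A, dist y x ≤ r} dist (f y) (f x)) / r`. -/
noncomputable def lowerScaledOsc {E F : Type*} [PseudoMetricSpace E] [PseudoMetricSpace F]
    (A : Set E) (f : E → F) (x : E) : ℝ≥0∞ :=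
  Filter.liminf
    (fun r : ℝ =>
      (⨆ (y : E) (_ : y ∈ A) (_ : dist y x ≤ r), ENNReal.ofReal (dist (f y) (f x))) /
        ENNReal.ofReal r)
    (nhdsWithin 0 (Set.Ioi 0))

/-- Upper-scaled oscillation of `f` with domain `A`:
`L_f(x) = limsup_{r→0⁺} (sup_{y ∈ A, dist y x ≤ r} dist (f y) (f x)) / r`. -/
noncomputable def upperScaledOsc {E F : Type*} [PseudoMetricSpace E] [PseudoMetricSpace F]
    (A : Set E) (f : E → F) (x : E) : ℝ≥0∞ :=
  Filter.limsup
    (fun r : ℝ =>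
      (⨆ (y : E) (_ : y ∈ A) (_ : dist y x ≤ r), ENNReal.ofReal (dist (f y) (f x))) /
        ENNReal.ofReal r)
    (nhdsWithin 0 (Set.Ioi 0))

private lemma key10 (m : ℕ) (f : (Fin m → ℝ) → ℝ) (x : Fin m → ℝ)
    (h : upperScaledOsc (Set.Icc (0 : Fin m → ℝ) 1) f x < ⊤) :
    ∃ n : ℕ, ∀ y ∈ Set.Icc (0 : Fin m → ℝ) 1,
      dist y x ≤ 1 / (n + 1) → dist (f y) (f x) ≤ (n + 1) * dist y x := by
  set A := Set.Icc (0 : Fin m → ℝ) 1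
  set g := fun r : ℝ =>
    (⨆ (y : Fin m → ℝ) (_ : y ∈ A) (_ : dist y x ≤ r), ENNReal.ofReal (dist (f y) (f x))) /
      ENNReal.ofReal r with hg
  set C : ℝ≥0∞ := upperScaledOsc A f x + 1 with hC
  have hCne : C ≠ ⊤ := by
    simp [hC, ENNReal.add_ne_top, h.ne]
  have h1 : ∀ᶠ r in 𝓝[>] (0:ℝ), g r < C :=
    Filter.eventually_lt_of_limsup_lt (ENNReal.lt_add_right h.ne one_ne_zero)
  rw [eventually_nhdsWithin_iff, Metric.eventually_nhds_iff] at h1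
  obtain ⟨ε, εpos, hε⟩ := h1
  obtain ⟨N₁, hN₁⟩ := exists_nat_gt C.toReal
  obtain ⟨N₂, hN₂⟩ := exists_nat_one_div_lt εpos
  refine ⟨max N₁ N₂, fun y hy hyd => ?_⟩
  set n := max N₁ N₂
  rcases eq_or_lt_of_le (dist_nonneg : (0:ℝ) ≤ dist y x) with hr | hr
  · have : y = x := by rwa [eq_comm, dist_eq_zero] at hr
    simp [this]
  set r := dist y x
  have hrε : r < ε := by
    have h2 : (1:ℝ) / (n + 1) ≤ 1 / (N₂ + 1) := by
      apply one_div_le_one_div_of_le (by positivity)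
      have : (N₂ : ℝ) ≤ n := by exact_mod_cast le_max_right N₁ N₂
      linarith
    linarith
  have hgr : g r < C := hε (by rwa [Real.dist_eq, sub_zero, abs_of_pos hr]) hr
  have hsup : ENNReal.ofReal (dist (f y) (f x)) ≤
      ⨆ (z : Fin m → ℝ) (_ : z ∈ A) (_ : dist z x ≤ r), ENNReal.ofReal (dist (f z) (f x)) := by
    refine le_iSup_of_le y ?_
    rw [iSup_pos hy, iSup_pos le_rfl]
  have hlt : ENNReal.ofReal (dist (f y) (f x)) < C * ENNReal.ofReal r := by
    have := lt_of_le_of_lt (ENNReal.div_le_div_right hsup (ENNReal.ofReal r)) hgr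
    rwa [ENNReal.div_lt_iff (Or.inl (by simp [hr])) (Or.inl ENNReal.ofReal_ne_top)] at this
  have hd : dist (f y) (f x) ≤ C.toReal * r := by
    have h3 : (C * ENNReal.ofReal r).toReal = C.toReal * r := by
      rw [ENNReal.toReal_mul, ENNReal.toReal_ofReal hr.le]
    have := ENNReal.toReal_mono (by simp [ENNReal.mul_ne_top, hCne]) hlt.le
    rwa [ENNReal.toReal_ofReal dist_nonneg, h3] at this
  have hn : C.toReal ≤ (n:ℝ) + 1 := by
    have : (N₁ : ℝ) ≤ n := by exact_mod_cast le_max_left N₁ N₂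
    linarith
  calc dist (f y) (f x) ≤ C.toReal * r := hd
    _ ≤ ((n:ℝ) + 1) * r := by apply mul_le_mul_of_nonneg_right hn hr.le

theorem stmt10 (m : ℕ) (f : (Fin m → ℝ) → ℝ)
    (hL : ∀ x ∈ Set.Icc (0 : Fin m → ℝ) 1, upperScaledOsc (Set.Icc 0 1) f x < ⊤) :
    ∃ E : ℕ → Set (Fin m → ℝ),
      (Set.Icc (0 : Fin m → ℝ) 1 = ⋃ n, E n) ∧
      (∀ n, ∃ K : ℝ≥0, LipschitzOnWith K f (E n)) := by
  set A := Set.Icc (0 : Fin m → ℝ) 1 with hA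
  set P : ℕ → Set (Fin m → ℝ) := fun n =>
    {x | x ∈ A ∧ ∀ y ∈ A, dist y x ≤ 1 / (n + 1) → dist (f y) (f x) ≤ (n + 1) * dist y x}
  have : Nonempty (Fin m → ℝ) := ⟨0⟩
  set c : ℕ → (Fin m → ℝ) := TopologicalSpace.denseSeq (Fin m → ℝ)
  have hc : DenseRange c := TopologicalSpace.denseRange_denseSeq _
  refine ⟨fun k => P k.unpair.1 ∩ Metric.closedBall (c k.unpair.2)
      (1 / (2 * (k.unpair.1 + 1))), ?_, ?_⟩
  · apply Set.Subset.antisymm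
    · intro x hx
      obtain ⟨n, hn⟩ := key10 m f x (hL x hx)
      obtain ⟨j, hj⟩ := Metric.denseRange_iff.1 hc x (1 / (2 * (n + 1))) (by positivity)
      refine Set.mem_iUnion.2 ⟨Nat.pair n j, ?_⟩
      simp only [Nat.unpair_pair]
      exact ⟨⟨hx, hn⟩, by rw [Metric.mem_closedBall]; exact hj.le⟩
    · intro x hx
      obtain ⟨k, hk⟩ := Set.mem_iUnion.1 hx
      exact hk.1.1
  · intro k
    set n := k.unpair.1
    refine ⟨(n : ℝ≥0) + 1, LipschitzOnWith.of_dist_le_mul fun x hx y hy => ?_⟩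
    have hd : dist y x ≤ 1 / (n + 1) := by
      have h1 := hx.2
      have h2 := hy.2
      rw [Metric.mem_closedBall] at h1 h2
      calc dist y x ≤ dist y (c k.unpair.2) + dist (c k.unpair.2) x := dist_triangle _ _ _
        _ ≤ 1 / (2 * (n + 1)) + 1 / (2 * (n + 1)) := by
            exact add_le_add h2 (by rwa [dist_comm] at h1)
        _ = 1 / (n + 1) := by rw [← add_div, mul_comm, ← div_div, div_right_comm]; norm_num
    have := hx.1.2 y hy.1.1 hd
    rw [dist_comm (f x) (f y), dist_comm x y]
    calc dist (f y) (f x) ≤ ((n:ℝ) + 1) * dist y x := this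
      _ = ((((n:ℝ≥0) + 1) : ℝ≥0) : ℝ) * dist y x := by push_cast; ring
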